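/- arXiv:1808.04233 — 2 statements merged into one kernel-verified Lean document; each statement's English description precedes it below -/
import Mathlib

section
/- For n ≥ 3, k_n = sqrt((n-1)/2) · Γ((n-2)/2)/Γ((n-1)/2) > 1. -/
open Real

lemma gamma_add_half_le (x : ℝ) (hx : 0 < x) :
    Real.Gamma (x + 1/2) ≤ Real.sqrt x * Real.Gamma x := by
  have hx1 : (0:ℝ) < x + 1 := by linarith
  have hG : 0 < Real.Gamma x := Real.Gamma_pos_of_pos hx
  have hG1 : 0 < Real.Gamma (x + 1) := Real.Gamma_pos_of_pos hx1
  have hGh : 0 < Real.Gamma (x + 1/2) := Real.Gamma_pos_of_pos (by linarith)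
  have hc := Real.convexOn_log_Gamma.2 (Set.mem_Ioi.mpr hx) (Set.mem_Ioi.mpr hx1)
    (by norm_num : (0:ℝ) ≤ 1/2) (by norm_num : (0:ℝ) ≤ 1/2) (by norm_num)
  have heq : (1/2 : ℝ) • x + (1/2 : ℝ) • (x + 1) = x + 1/2 := by simp only [smul_eq_mul]; ring
  rw [heq] at hc
  simp only [Function.comp_apply, smul_eq_mul] at hc
  -- hc : log Γ(x+1/2) ≤ 1/2 * log Γ x + 1/2 * log Γ(x+1)
  have hsq : Real.Gamma (x + 1/2) ^ 2 ≤ Real.Gamma x * Real.Gamma (x + 1) := by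
    have h2 : 2 * Real.log (Real.Gamma (x + 1/2))
        ≤ Real.log (Real.Gamma x * Real.Gamma (x + 1)) := by
      rw [Real.log_mul hG.ne' hG1.ne']; linarith
    have := Real.exp_le_exp.mpr h2
    rwa [Real.exp_log (mul_pos hG hG1),
      show 2 * Real.log (Real.Gamma (x + 1/2)) = Real.log (Real.Gamma (x + 1/2) ^ 2) by
        rw [Real.log_pow]; push_cast; ring,
      Real.exp_log (pow_pos hGh 2)] at this
  have hxg : Real.Gamma x * Real.Gamma (x + 1) = x * Real.Gamma x ^ 2 := by
    rw [Real.Gamma_add_one hx.ne']; ring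
  have : Real.Gamma (x + 1/2) ^ 2 ≤ x * Real.Gamma x ^ 2 := hxg ▸ hsq
  have hs : Real.Gamma (x + 1/2) ≤ Real.sqrt (x * Real.Gamma x ^ 2) :=
    Real.le_sqrt' hGh |>.mpr this
  rwa [Real.sqrt_mul hx.le, Real.sqrt_sq hG.le] at hs

theorem kn_gt_one (n : ℕ) (hn : 3 ≤ n) :
    1 < Real.sqrt (((n : ℝ) - 1) / 2) * Real.Gamma (((n : ℝ) - 2) / 2)
          / Real.Gamma (((n : ℝ) - 1) / 2) := by
  set x : ℝ := ((n : ℝ) - 2) / 2 with hxdef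
  have hn3 : (3:ℝ) ≤ (n:ℝ) := by exact_mod_cast hn
  have hx : 0 < x := by rw [hxdef]; linarith
  have hGh : 0 < Real.Gamma (x + 1/2) := Real.Gamma_pos_of_pos (by linarith)
  have hG : 0 < Real.Gamma x := Real.Gamma_pos_of_pos hx
  have key : Real.Gamma (x + 1/2) < Real.sqrt (x + 1/2) * Real.Gamma x := by
    calc Real.Gamma (x + 1/2) ≤ Real.sqrt x * Real.Gamma x := gamma_add_half_le x hx
      _ < Real.sqrt (x + 1/2) * Real.Gamma x := by
          apply mul_lt_mul_of_pos_right _ hG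
          exact Real.sqrt_lt_sqrt hx.le (by linarith)
  have h1 : ((n : ℝ) - 1) / 2 = x + 1/2 := by rw [hxdef]; ring
  rw [h1, lt_div_iff₀ hGh, one_mul]
  exact key
end

section
/- If (R_t) is stationary with constant variance σ² > 0 and autocorrelation ρ_k at lag k, expected return μ and risk-free rate R_f with μ ≠ R_f, and SR = (μ−R_f)/σ, SR(q) = q(μ−R_f)/sqrt(Var[R_t(q)]), then SR(q)/SR = sqrt(q / (1 + (2/q)·Σ_{k=1}^{q−1} (q−k)·ρ_k)). -/
open MeasureTheory ProbabilityTheory Finset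

/-- Covariance of two real random variables. -/
noncomputable def cov {Ω : Type*} [MeasurableSpace Ω] (X Y : Ω → ℝ) (μ : Measure Ω) : ℝ :=
  ∫ ω, (X ω - ∫ x, X x ∂μ) * (Y ω - ∫ x, Y x ∂μ) ∂μ

/-- Correlation of two real random variables. -/
noncomputable def corr {Ω : Type*} [MeasurableSpace Ω] (X Y : Ω → ℝ) (μ : Measure Ω) : ℝ :=
  cov X Y μ / (Real.sqrt (variance X μ) * Real.sqrt (variance Y μ))

private lemma integrable_mul_of_L2 {Ω : Type*} [MeasurableSpace Ω] {μ : Measure Ω}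
    {f g : Ω → ℝ} (hf : MemLp f 2 μ) (hg : MemLp g 2 μ) :
    Integrable (fun ω => f ω * g ω) μ := by
  have hfg : AEStronglyMeasurable (fun ω => f ω * g ω) μ :=
    hf.aestronglyMeasurable.mul hg.aestronglyMeasurable
  have hbound : Integrable (fun ω => (f ω ^ 2 + g ω ^ 2) / 2) μ :=
    (hf.integrable_sq.add hg.integrable_sq).div_const 2
  refine hbound.mono' hfg (ae_of_all _ fun ω => ?_)
  rw [Real.norm_eq_abs, abs_mul]
  nlinarith [sq_nonneg (|f ω| - |g ω|), abs_nonneg (f ω), abs_nonneg (g ω),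
    sq_abs (f ω), sq_abs (g ω)]

/-- The key combinatorial identity, in "range" form. -/
private lemma double_sum_natAbs (f : ℕ → ℝ) (q : ℕ) :
    ∑ i ∈ range q, ∑ j ∈ range q, f (((i : ℤ) - (j : ℤ)).natAbs)
      = 2 * ∑ k ∈ range q, ((q : ℝ) - (k : ℝ)) * f k - (q : ℝ) * f 0 := by
  induction q with
  | zero => simp
  | succ q ih =>
    have hrow : ∀ m : ℕ, ∑ i ∈ range m, f (((i : ℤ) - (m : ℤ)).natAbs)
        = ∑ k ∈ range m, f (k + 1) := by
      intro m
      have h1 : ∀ i ∈ range m, f (((i : ℤ) - (m : ℤ)).natAbs) = f (m - i) := by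
        intro i hi
        simp only [mem_range] at hi
        congr 1
        omega
      rw [Finset.sum_congr rfl h1]
      have := Finset.sum_range_reflect (fun k => f (k + 1)) m
      rw [← this]
      refine Finset.sum_congr rfl fun i hi => ?_
      simp only [mem_range] at hi
      congr 1
      omega
    have hcol : ∀ m : ℕ, ∑ j ∈ range m, f (((m : ℤ) - (j : ℤ)).natAbs)
        = ∑ k ∈ range m, f (k + 1) := by
      intro m
      have h1 : ∀ j ∈ range m, f (((m : ℤ) - (j : ℤ)).natAbs) = f (m - j) := by
        intro j hj
        simp only [mem_range] at hj
        congr 1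
        omega
      rw [Finset.sum_congr rfl h1]
      have := Finset.sum_range_reflect (fun k => f (k + 1)) m
      rw [← this]
      refine Finset.sum_congr rfl fun j hj => ?_
      simp only [mem_range] at hj
      congr 1
      omega
    rw [Finset.sum_range_succ]
    have hinner : ∀ i ∈ range q,
        ∑ j ∈ range (q + 1), f (((i : ℤ) - (j : ℤ)).natAbs)
          = (∑ j ∈ range q, f (((i : ℤ) - (j : ℤ)).natAbs)) + f (q - i) := by
      intro i hi
      simp only [mem_range] at hi
      rw [Finset.sum_range_succ]
      congr 2
      omega
    rw [Finset.sum_congr rfl hinner, Finset.sum_add_distrib]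
    have hqi : ∑ i ∈ range q, f (q - i) = ∑ k ∈ range q, f (k + 1) := by
      have := Finset.sum_range_reflect (fun k => f (k + 1)) q
      rw [← this]
      refine Finset.sum_congr rfl fun i hi => ?_
      simp only [mem_range] at hi
      congr 1
      omega
    rw [hqi, ih]
    -- last row: j over range (q+1), i = q
    rw [Finset.sum_range_succ]
    rw [hcol q]
    have hq0 : ((q : ℤ) - (q : ℤ)).natAbs = 0 := by omega
    rw [hq0]
    -- now pure algebra with sums over range q and range (q+1)
    have hshift : ∑ k ∈ range q, f (k + 1) = (∑ k ∈ range (q + 1), f k) - f 0 := by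
      rw [Finset.sum_range_succ' f q]
      ring
    rw [hshift]
    have hR : ∑ k ∈ range (q + 1), (((q : ℕ) + 1 : ℝ) - (k : ℝ)) * f k
        = (∑ k ∈ range q, ((q : ℝ) - (k : ℝ)) * f k) + ∑ k ∈ range (q + 1), f k := by
      rw [Finset.sum_range_succ]
      rw [Finset.sum_range_succ (fun k => (f k : ℝ))]
      have : ∀ k ∈ range q, (((q : ℕ) + 1 : ℝ) - (k : ℝ)) * f k
          = ((q : ℝ) - (k : ℝ)) * f k + f k := by
        intro k _; ring
      rw [Finset.sum_congr rfl this, Finset.sum_add_distrib]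
      ring
    push_cast [hR] at *
    ring

theorem sharpe_ratio_q_period
    {Ω : Type*} [MeasurableSpace Ω] (μ : Measure Ω) [IsProbabilityMeasure μ]
    (R : ℤ → Ω → ℝ) (σ μR Rf : ℝ) (ρ : ℕ → ℝ) (t : ℤ) (q : ℕ) (hq : 1 ≤ q)
    (hL2 : ∀ u : ℤ, MemLp (R u) 2 μ)
    (hσ : 0 < σ)
    (hmean : ∀ u : ℤ, ∫ ω, R u ω ∂μ = μR)
    (hvar : ∀ u : ℤ, variance (R u) μ = σ ^ 2)
    (hcorr : ∀ u v : ℤ, corr (R u) (R v) μ = ρ ((v - u).natAbs))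
    (hμ : μR ≠ Rf)
    (hVpos : 0 < variance (fun ω => ∑ i ∈ range q, R (t - i) ω) μ) :
    ((q : ℝ) * (μR - Rf) / Real.sqrt (variance (fun ω => ∑ i ∈ range q, R (t - i) ω) μ))
        / ((μR - Rf) / σ)
      = Real.sqrt ((q : ℝ) /
          (1 + (2 / (q : ℝ)) * ∑ k ∈ Icc 1 (q - 1), ((q : ℝ) - (k : ℝ)) * ρ k)) := by
  have hσ2 : (0 : ℝ) < σ ^ 2 := by positivity
  have hsσ : Real.sqrt (σ ^ 2) = σ := by
    rw [Real.sqrt_sq hσ.le]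
  -- covariances
  have hcov : ∀ u v : ℤ, cov (R u) (R v) μ = σ ^ 2 * ρ ((v - u).natAbs) := by
    intro u v
    have h := hcorr u v
    unfold corr at h
    rw [hvar u, hvar v, hsσ] at h
    field_simp at h
    rw [h]
  -- ρ 0 = 1
  have hρ0 : ρ 0 = 1 := by
    have h := hcov t t
    simp only [sub_self, Int.natAbs_zero] at h
    have hc : cov (R t) (R t) μ = σ ^ 2 := by
      unfold cov
      rw [← hvar t, variance_eq_integral (hL2 t).aestronglyMeasurable.aemeasurable]
      refine integral_congr_ae (ae_of_all _ fun ω => ?_)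
      simp [sq]
    rw [hc] at h
    field_simp at h
    linarith
  -- variance of the sum
  set S : Ω → ℝ := fun ω => ∑ i ∈ range q, R (t - i) ω with hS
  have hmemS : MemLp S 2 μ := by
    have h := memLp_finset_sum' (range q) (fun i (_ : i ∈ range q) => hL2 (t - i))
    have heq : (∑ i ∈ range q, R (t - i)) = S := by
      funext ω; simp [hS]
    rwa [heq] at h
  have hintS : ∫ ω, S ω ∂μ = q * μR := by
    simp only [hS]
    calc ∫ ω, ∑ i ∈ range q, R (t - i) ω ∂μ
        = ∑ i ∈ range q, ∫ ω, R (t - i) ω ∂μ :=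
          integral_finset_sum _ fun i _ => (hL2 (t - i)).integrable one_le_two
      _ = q * μR := by simp [hmean]
  have hY : ∀ u : ℤ, MemLp (fun ω => R u ω - μR) 2 μ := fun u =>
    (hL2 u).sub (memLp_const μR)
  have hintY : ∀ u v : ℤ,
      Integrable (fun ω => (R u ω - μR) * (R v ω - μR)) μ := fun u v =>
    integrable_mul_of_L2 (hY u) (hY v)
  have hcovY : ∀ u v : ℤ, ∫ ω, (R u ω - μR) * (R v ω - μR) ∂μ
      = σ ^ 2 * ρ ((v - u).natAbs) := by
    intro u v
    rw [← hcov u v]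
    unfold cov
    rw [hmean u, hmean v]
  have hvarS : variance S μ
      = σ ^ 2 * (2 * ∑ k ∈ range q, ((q : ℝ) - (k : ℝ)) * ρ k - (q : ℝ) * ρ 0) := by
    rw [variance_eq_integral hmemS.aestronglyMeasurable.aemeasurable]
    change ∫ ω, ((S - fun _ => ∫ x, S x ∂μ) ^ (2 : ℕ) : Ω → ℝ) ω ∂μ = _
    have hexp : ((S - fun _ => ∫ x, S x ∂μ) ^ (2 : ℕ) : Ω → ℝ)
        = fun ω => ∑ i ∈ range q, ∑ j ∈ range q,
            (R (t - i) ω - μR) * (R (t - j) ω - μR) := by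
      funext ω
      simp only [Pi.pow_apply, Pi.sub_apply, hintS, hS]
      rw [← Finset.sum_mul_sum]
      rw [sq]
      congr 1 <;>
      · rw [Finset.sum_sub_distrib, Finset.sum_const, card_range, nsmul_eq_mul]
        exact congrArg _ hintS
    simp only [hexp]
    rw [integral_finset_sum _ fun i _ => integrable_finset_sum _ fun j _ => hintY _ _]
    have : ∀ i ∈ range q, ∫ ω, ∑ j ∈ range q,
        (R (t - i) ω - μR) * (R (t - j) ω - μR) ∂μ
        = ∑ j ∈ range q, σ ^ 2 * ρ (((i : ℤ) - (j : ℤ)).natAbs) := by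
      intro i _
      rw [integral_finset_sum _ fun j _ => hintY _ _]
      refine Finset.sum_congr rfl fun j _ => ?_
      rw [hcovY]
      congr 2
      omega
    rw [Finset.sum_congr rfl this]
    simp only [← Finset.mul_sum]
    rw [double_sum_natAbs ρ q]
  -- rewrite the range sum as the Icc sum
  have hrange_Icc : ∑ k ∈ range q, ((q : ℝ) - (k : ℝ)) * ρ k
      = (q : ℝ) * ρ 0 + ∑ k ∈ Icc 1 (q - 1), ((q : ℝ) - (k : ℝ)) * ρ k := by
    have h0 : (0 : ℕ) ∈ range q := by simp; omega
    rw [← Finset.add_sum_erase _ _ h0]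
    have : (range q).erase 0 = Icc 1 (q - 1) := by
      ext x
      simp only [mem_erase, mem_range, mem_Icc]
      omega
    rw [this]
    simp
  set T : ℝ := ∑ k ∈ Icc 1 (q - 1), ((q : ℝ) - (k : ℝ)) * ρ k with hT
  have hA : variance S μ = σ ^ 2 * ((q : ℝ) + 2 * T) := by
    rw [hvarS, hrange_Icc, hρ0]
    ring
  have hApos : (0 : ℝ) < (q : ℝ) + 2 * T := by
    by_contra h
    push_neg at h
    have : variance S μ ≤ 0 := by
      rw [hA]
      exact mul_nonpos_of_nonneg_of_nonpos hσ2.le h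
    linarith
  have hqpos : (0 : ℝ) < (q : ℝ) := by exact_mod_cast hq
  have hsqrtS : Real.sqrt (variance S μ) = σ * Real.sqrt ((q : ℝ) + 2 * T) := by
    rw [hA, Real.sqrt_mul hσ2.le, hsσ]
  have hΔ : μR - Rf ≠ 0 := sub_ne_zero.mpr hμ
  have hden : (1 : ℝ) + (2 / (q : ℝ)) * T = ((q : ℝ) + 2 * T) / q := by
    field_simp
  rw [hsqrtS, hden]
  have hsA : Real.sqrt ((q : ℝ) + 2 * T) ≠ 0 := by
    positivity
  have hRHS : Real.sqrt ((q : ℝ) / (((q : ℝ) + 2 * T) / q))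
      = (q : ℝ) / Real.sqrt ((q : ℝ) + 2 * T) := by
    rw [div_div_eq_mul_div, ← sq]
    rw [Real.sqrt_div (by positivity) _]
    rw [Real.sqrt_sq hqpos.le]
  rw [hRHS]
  have hsq2 : Real.sqrt ((q : ℝ) + 2 * T) ^ 2 = (q : ℝ) + 2 * T :=
    Real.sq_sqrt hApos.le
  field_simp
end
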